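/- Any totally ordered resource theory allows for free transformations between any two pure states: if for every pair of density matrices ρ, σ at least one of ρ → σ or σ → ρ holds, then for any two pure states |ψ⟩ and |φ⟩ the conversion |ψ⟩⟨ψ| → |φ⟩⟨φ| is possible by free operations. -/

import Mathlib

open scoped Matrix Kronecker ComplexOrder

noncomputable section

/-- A density matrix: positive semidefinite with unit trace. -/
def IsDensityMatrix {ι : Type*} [Fintype ι] (ρ : Matrix ι ι ℂ) : Prop :=
  ρ.PosSemidef ∧ ρ.trace = 1

/-- The trace norm `‖M‖₁ = Tr √(M† M)`. -/
noncomputable def traceNorm {ι : Type*} [Fintype ι] [DecidableEq ι]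
    (M : Matrix ι ι ℂ) : ℝ :=
  (((Matrix.posSemidef_conjTranspose_mul_self M).1.eigenvectorUnitary.1 *
      Matrix.diagonal (((↑) : ℝ → ℂ) ∘ (√·) ∘ (Matrix.posSemidef_conjTranspose_mul_self M).1.eigenvalues) *
      (star (Matrix.posSemidef_conjTranspose_mul_self M).1.eigenvectorUnitary : Matrix ι ι ℂ)).trace).re

/-- The amplification `Λ ⊗ id_k` of a linear map on matrices. -/
def amplify {ι : Type*} [Fintype ι] [DecidableEq ι]
    (Λ : Matrix ι ι ℂ →ₗ[ℂ] Matrix ι ι ℂ) (k : ℕ)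
    (M : Matrix (ι × Fin k) (ι × Fin k) ℂ) : Matrix (ι × Fin k) (ι × Fin k) ℂ :=
  Matrix.of fun p q => Λ (Matrix.of fun i j => M (i, p.2) (j, q.2)) p.1 q.1

/-- A linear map on matrices is CPTP (a quantum channel) if all its amplifications
preserve positive semidefiniteness and it preserves the trace. -/
def IsCPTP {ι : Type*} [Fintype ι] [DecidableEq ι]
    (Λ : Matrix ι ι ℂ →ₗ[ℂ] Matrix ι ι ℂ) : Prop :=
  (∀ (k : ℕ) (M : Matrix (ι × Fin k) (ι × Fin k) ℂ),
      M.PosSemidef → (amplify Λ k M).PosSemidef) ∧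
  (∀ M, (Λ M).trace = M.trace)

/-- A quantum channel on a `d`-dimensional system. -/
structure QChannel (d : ℕ) where
  toFun : Matrix (Fin d) (Fin d) ℂ →ₗ[ℂ] Matrix (Fin d) (Fin d) ℂ
  cptp : IsCPTP toFun

/-- A resource theory: a convex compact set `F` of free states and a set `O` of free
operations containing the identity, closed under composition, preserving `F`, and
containing the state-preparation channel `ρ ↦ Tr(ρ)σ` for every free `σ`. -/
structure ResourceTheory (d : ℕ) where
  F : Set (Matrix (Fin d) (Fin d) ℂ)
  O : Set (QChannel d)
  F_density : ∀ σ ∈ F, IsDensityMatrix σ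
  F_convex : Convex ℝ F
  F_compact : IsCompact F
  id_mem : ∃ Λ ∈ O, ∀ ρ, Λ.toFun ρ = ρ
  comp_mem : ∀ Λ₁ ∈ O, ∀ Λ₂ ∈ O, ∃ Λ ∈ O, ∀ ρ, Λ.toFun ρ = Λ₂.toFun (Λ₁.toFun ρ)
  free_mapsto : ∀ Λ ∈ O, ∀ σ ∈ F, Λ.toFun σ ∈ F
  prep_mem : ∀ σ ∈ F, ∃ Λ ∈ O, ∀ ρ : Matrix (Fin d) (Fin d) ℂ, Λ.toFun ρ = ρ.trace • σ

/-- `ρ → σ`: for every `ε > 0` some free operation maps `ρ` within trace-distance `ε` of `σ`. -/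
def Converts {d : ℕ} (RT : ResourceTheory d) (ρ σ : Matrix (Fin d) (Fin d) ℂ) : Prop :=
  ∀ ε > 0, ∃ Λ ∈ RT.O, traceNorm (Λ.toFun ρ - σ) < ε

/-- A resource monotone: nonnegative on states, nonincreasing under free operations,
vanishing on free states. -/
def IsMonotone {d : ℕ} (RT : ResourceTheory d) (R : Matrix (Fin d) (Fin d) ℂ → ℝ) : Prop :=
  (∀ ρ, IsDensityMatrix ρ → 0 ≤ R ρ) ∧
  (∀ ρ, IsDensityMatrix ρ → ∀ Λ ∈ RT.O, R (Λ.toFun ρ) ≤ R ρ) ∧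
  (∀ σ ∈ RT.F, R σ = 0)

/-- The pure state `|ψ⟩⟨ψ|`. -/
def pureState {ι : Type*} (ψ : ι → ℂ) : Matrix ι ι ℂ :=
  Matrix.vecMulVec ψ (star ψ)

/-- `ψ` is a unit vector. -/
def IsUnitVec {ι : Type*} [Fintype ι] (ψ : ι → ℂ) : Prop :=
  ∑ i, Complex.normSq (ψ i) = 1

/-- Trace-norm distance from `ρ` to a set of states. -/
noncomputable def distToSet {ι : Type*} [Fintype ι] [DecidableEq ι]
    (F : Set (Matrix ι ι ℂ)) (ρ : Matrix ι ι ℂ) : ℝ :=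
  sInf ((fun μ => traceNorm (ρ - μ)) '' F)



/-! ### Auxiliary lemmas for the proof -/

namespace PureConvAux

open Matrix Complex

variable {ι : Type*} [Fintype ι] [DecidableEq ι]

lemma sqrtM_psd {A : Matrix ι ι ℂ} (hA : A.PosSemidef) :
    (hA.1.eigenvectorUnitary.1 * Matrix.diagonal (((↑) : ℝ → ℂ) ∘ (√·) ∘ hA.1.eigenvalues) *
      (star hA.1.eigenvectorUnitary : Matrix ι ι ℂ)).PosSemidef := by
  rw [Matrix.star_eq_conjTranspose]
  exact (Matrix.posSemidef_diagonal_iff.mpr fun i => Complex.zero_le_real.mpr (Real.sqrt_nonneg _))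
    |>.mul_mul_conjTranspose_same _

lemma sqrtM_sq {A : Matrix ι ι ℂ} (hA : A.PosSemidef) :
    (hA.1.eigenvectorUnitary.1 * Matrix.diagonal (((↑) : ℝ → ℂ) ∘ (√·) ∘ hA.1.eigenvalues) *
      (star hA.1.eigenvectorUnitary : Matrix ι ι ℂ)) ^ 2 = A := by
  have hV : star (hA.1.eigenvectorUnitary : Matrix ι ι ℂ) *
      (hA.1.eigenvectorUnitary : Matrix ι ι ℂ) = 1 :=
    Matrix.mem_unitaryGroup_iff'.mp (hA.1.eigenvectorUnitary).2
  rw [pow_two]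
  rw [show ∀ (U D1 W : Matrix ι ι ℂ), U * D1 * W * (U * D1 * W) =
    U * (D1 * ((W * U) * D1)) * W from fun U D1 W => by noncomm_ring]
  rw [hV, one_mul, Matrix.diagonal_mul_diagonal]
  conv_rhs => rw [hA.1.spectral_theorem, Unitary.conjStarAlgAut_apply]
  congr 2
  ext i
  simp only [Matrix.diagonal_apply, Function.comp_apply, ← Complex.ofReal_mul, Real.mul_self_sqrt (hA.eigenvalues_nonneg i)]
  rfl

lemma traceNorm_spec (M : Matrix ι ι ℂ) : ∃ S : Matrix ι ι ℂ, S.PosSemidef ∧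
    S ^ 2 = Mᴴ * M ∧ traceNorm M = S.trace.re :=
  ⟨_, sqrtM_psd (Matrix.posSemidef_conjTranspose_mul_self M),
    sqrtM_sq (Matrix.posSemidef_conjTranspose_mul_self M), rfl⟩

open scoped MatrixOrder in
/-- If `S` is psd and `S ^ 2 = Mᴴ * M` then the trace norm of `M` is the real part of the
trace of `S`. -/
lemma traceNorm_eq_of_sq {M S : Matrix ι ι ℂ} (hS : S.PosSemidef) (h : S ^ 2 = Mᴴ * M) :
    traceNorm M = S.trace.re := by
  obtain ⟨T, hT, hT2, hTr⟩ := traceNorm_spec M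
  have h1 : T = S :=
    (CFC.sqrt_unique (a := Mᴴ * M) (by rw [← pow_two, hT2]) (nonneg_iff_posSemidef.mpr hT)).symm.trans
      (CFC.sqrt_unique (by rw [← pow_two, h]) (nonneg_iff_posSemidef.mpr hS))
  rw [hTr, h1]

lemma unitary_conj_trace {V : Matrix ι ι ℂ} (hV : V ∈ Matrix.unitaryGroup ι ℂ)
    (D : Matrix ι ι ℂ) : (V * D * star V).trace = D.trace := by
  rw [Matrix.trace_mul_comm, ← mul_assoc, Matrix.mem_unitaryGroup_iff'.mp hV, one_mul]

/-- Conjugation of a real diagonal matrix by the eigenbasis of a Hermitian matrix. -/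
noncomputable def cdiag {M : Matrix ι ι ℂ} (hM : M.IsHermitian) (g : ι → ℝ) : Matrix ι ι ℂ :=
  (hM.eigenvectorUnitary : Matrix ι ι ℂ) * Matrix.diagonal (fun i => (g i : ℂ))
    * star (hM.eigenvectorUnitary : Matrix ι ι ℂ)

lemma spectral {M : Matrix ι ι ℂ} (hM : M.IsHermitian) : M = cdiag hM hM.eigenvalues := by
  have := hM.spectral_theorem
  rw [Unitary.conjStarAlgAut_apply] at this
  rw [cdiag]
  exact this

lemma cdiag_mul {M : Matrix ι ι ℂ} (hM : M.IsHermitian) (g h : ι → ℝ) :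
    cdiag hM g * cdiag hM h = cdiag hM (fun i => g i * h i) := by
  have hV : star (hM.eigenvectorUnitary : Matrix ι ι ℂ) *
      (hM.eigenvectorUnitary : Matrix ι ι ℂ) = 1 :=
    Matrix.mem_unitaryGroup_iff'.mp (hM.eigenvectorUnitary).2
  rw [cdiag, cdiag, cdiag]
  rw [show ∀ (U D1 W D2 : Matrix ι ι ℂ), U * D1 * W * (U * D2 * W) =
    U * (D1 * ((W * U) * D2)) * W from fun U D1 W D2 => by noncomm_ring]
  rw [hV, one_mul, Matrix.diagonal_mul_diagonal]
  congr 2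
  · ext i
    push_cast
    rfl

lemma cdiag_trace {M : Matrix ι ι ℂ} (hM : M.IsHermitian) (g : ι → ℝ) :
    (cdiag hM g).trace = ∑ i, (g i : ℂ) := by
  rw [cdiag, unitary_conj_trace (hM.eigenvectorUnitary).2, Matrix.trace_diagonal]

lemma cdiag_herm {M : Matrix ι ι ℂ} (hM : M.IsHermitian) (g : ι → ℝ) :
    (cdiag hM g).IsHermitian := by
  rw [cdiag, Matrix.star_eq_conjTranspose]
  have hst : star (fun i => (g i : ℂ)) = fun i => (g i : ℂ) := by
    funext i; exact Complex.conj_ofReal _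
  rw [Matrix.IsHermitian, Matrix.conjTranspose_mul, Matrix.conjTranspose_mul,
    Matrix.conjTranspose_conjTranspose, Matrix.diagonal_conjTranspose, hst, mul_assoc]

lemma cdiag_psd {M : Matrix ι ι ℂ} (hM : M.IsHermitian) {g : ι → ℝ} (hg : ∀ i, 0 ≤ g i) :
    (cdiag hM g).PosSemidef := by
  rw [cdiag, Matrix.star_eq_conjTranspose]
  exact (Matrix.posSemidef_diagonal_iff.mpr fun i => Complex.zero_le_real.mpr (hg i))
    |>.mul_mul_conjTranspose_same _

lemma traceNorm_herm {M : Matrix ι ι ℂ} (hM : M.IsHermitian) :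
    traceNorm M = ∑ i, |hM.eigenvalues i| := by
  have habs : ∀ i, 0 ≤ |hM.eigenvalues i| := fun i => abs_nonneg _
  have hMM : M * M = cdiag hM (fun i => hM.eigenvalues i * hM.eigenvalues i) := by
    conv_lhs => rw [spectral hM]
    rw [cdiag_mul]
  have hsq : (cdiag hM fun i => |hM.eigenvalues i|) ^ 2 = Mᴴ * M := by
    rw [hM.eq, pow_two, cdiag_mul, hMM]
    have : (fun i => |hM.eigenvalues i| * |hM.eigenvalues i|)
        = fun i => hM.eigenvalues i * hM.eigenvalues i := funext fun i => abs_mul_abs_self _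
    rw [this]
  rw [traceNorm_eq_of_sq (cdiag_psd hM habs) hsq, cdiag_trace, Complex.re_sum]
  simp

end PureConvAux

namespace PureConvAux
open Matrix Complex
variable {ι : Type*} [Fintype ι] [DecidableEq ι]

/-- The key Hölder-type inequality: if `W = V D V⋆` with `V` unitary and `D` a real
diagonal with entries bounded by 1, then `|Re Tr (W M)| ≤ ‖M‖₁` for Hermitian `M`. -/
lemma abs_re_trace_mul_le {W M V : Matrix ι ι ℂ} (hM : M.IsHermitian)
    (hV : V ∈ Matrix.unitaryGroup ι ℂ) {w : ι → ℝ} (hw : ∀ i, |w i| ≤ 1)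
    (hW : W = V * Matrix.diagonal (fun i => (w i : ℂ)) * star V) :
    |((W * M).trace).re| ≤ traceNorm M := by
  set U := (hM.eigenvectorUnitary : Matrix ι ι ℂ) with hUdef
  have hU : U ∈ Matrix.unitaryGroup ι ℂ := (hM.eigenvectorUnitary).2
  set G := star V * U with hG
  have hGG : star G * G = 1 := by
    rw [hG, StarMul.star_mul, star_star, mul_assoc, ← mul_assoc V,
      Matrix.mem_unitaryGroup_iff.mp hV, one_mul, Matrix.mem_unitaryGroup_iff'.mp hU]
  have hcol : ∀ j, ∑ i, Complex.normSq (G i j) = 1 := by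
    intro j
    have h2 : (star G * G) j j = (1 : Matrix ι ι ℂ) j j := by rw [hGG]
    rw [Matrix.one_apply_eq, Matrix.mul_apply] at h2
    have h3 : ∀ i, (star G) j i * G i j = (Complex.normSq (G i j) : ℂ) := by
      intro i
      rw [Matrix.star_eq_conjTranspose, Matrix.conjTranspose_apply, Complex.star_def,
        mul_comm, Complex.mul_conj]
    rw [Finset.sum_congr rfl fun i _ => h3 i] at h2
    have := congrArg Complex.re h2
    rwa [Complex.re_sum, Complex.one_re,
      Finset.sum_congr rfl fun (i : ι) _ => Complex.ofReal_re _] at this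
  set lam := hM.eigenvalues with hlam
  have key : (W * M).trace
      = ∑ i, ∑ j, ((w i * lam j * Complex.normSq (G i j) : ℝ) : ℂ) := by
    have e1 : W * M = V * (Matrix.diagonal (fun i => (w i : ℂ)) * star V * U *
        Matrix.diagonal (fun i => (lam i : ℂ)) * star U) := by
      conv_lhs => rw [hW, spectral hM]
      rw [cdiag, ← hUdef, ← hlam]
      noncomm_ring
    have e2 : (Matrix.diagonal (fun i => (w i : ℂ)) * star V * U *
        Matrix.diagonal (fun i => (lam i : ℂ)) * star U) * V
        = Matrix.diagonal (fun i => (w i : ℂ)) *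
          (G * Matrix.diagonal (fun i => (lam i : ℂ)) * star G) := by
      rw [hG, StarMul.star_mul, star_star]
      noncomm_ring
    rw [e1, Matrix.trace_mul_comm, e2]
    rw [Matrix.trace]
    refine Finset.sum_congr rfl fun i _ => ?_
    rw [Matrix.diag_apply, Matrix.diagonal_mul, Matrix.mul_apply, Finset.mul_sum]
    refine Finset.sum_congr rfl fun j _ => ?_
    rw [Matrix.mul_diagonal, Matrix.star_eq_conjTranspose, Matrix.conjTranspose_apply]
    push_cast
    have hmc : G i j * star (G i j) = (Complex.normSq (G i j) : ℂ) := by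
      rw [Complex.star_def, Complex.mul_conj]
    calc (w i : ℂ) * (G i j * (lam j : ℂ) * star (G i j))
        = (w i : ℂ) * (lam j : ℂ) * (G i j * star (G i j)) := by ring
      _ = (w i : ℂ) * (lam j : ℂ) * (Complex.normSq (G i j) : ℂ) := by rw [hmc]
  rw [traceNorm_herm hM, key]
  have hre : (∑ i, ∑ j, ((w i * lam j * Complex.normSq (G i j) : ℝ) : ℂ)).re
      = ∑ i, ∑ j, (w i * lam j * Complex.normSq (G i j)) := by
    rw [Complex.re_sum]
    exact Finset.sum_congr rfl fun i _ => by
      rw [Complex.re_sum]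
      exact Finset.sum_congr rfl fun j _ => Complex.ofReal_re _
  rw [hre]
  calc |∑ i, ∑ j, w i * lam j * Complex.normSq (G i j)|
      ≤ ∑ i, ∑ j, |w i * lam j * Complex.normSq (G i j)| := by
        refine (Finset.abs_sum_le_sum_abs _ _).trans ?_
        exact Finset.sum_le_sum fun i _ => Finset.abs_sum_le_sum_abs _ _
    _ ≤ ∑ i, ∑ j, |lam j| * Complex.normSq (G i j) := by
        refine Finset.sum_le_sum fun i _ => Finset.sum_le_sum fun j _ => ?_
        rw [abs_mul, abs_mul, _root_.abs_of_nonneg (Complex.normSq_nonneg _)]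
        have h1 : |w i| * |lam j| ≤ 1 * |lam j| :=
          mul_le_mul_of_nonneg_right (hw i) (abs_nonneg _)
        rw [one_mul] at h1
        exact mul_le_mul_of_nonneg_right h1 (Complex.normSq_nonneg _)
    _ = ∑ j, |lam j| * ∑ i, Complex.normSq (G i j) := by
        rw [Finset.sum_comm]
        exact Finset.sum_congr rfl fun j _ => by rw [Finset.mul_sum]
    _ = ∑ j, |lam j| := Finset.sum_congr rfl fun j _ => by rw [hcol j, mul_one]

lemma traceNorm_psd {M : Matrix ι ι ℂ} (hM : M.PosSemidef) : traceNorm M = M.trace.re :=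
  traceNorm_eq_of_sq hM (by rw [pow_two, hM.1.eq])

lemma traceNorm_nonneg_herm {M : Matrix ι ι ℂ} (hM : M.IsHermitian) : 0 ≤ traceNorm M := by
  rw [traceNorm_herm hM]
  exact Finset.sum_nonneg fun i _ => abs_nonneg _

/-- Triangle inequality for the trace norm of Hermitian matrices. -/
lemma traceNorm_add_le {A B : Matrix ι ι ℂ} (hA : A.IsHermitian) (hB : B.IsHermitian) :
    traceNorm (A + B) ≤ traceNorm A + traceNorm B := by
  have hAB : (A + B).IsHermitian := hA.add hB
  set s : ι → ℝ := fun i => if hAB.eigenvalues i < 0 then -1 else 1 with hs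
  have hsb : ∀ i, |s i| ≤ 1 := by
    intro i; rw [hs]; dsimp only; split <;> simp
  set W := cdiag hAB s with hWdef
  have hWform : W = (hAB.eigenvectorUnitary : Matrix ι ι ℂ) *
      Matrix.diagonal (fun i => (s i : ℂ)) * star (hAB.eigenvectorUnitary : Matrix ι ι ℂ) := rfl
  have h1 : ((W * (A + B)).trace).re = traceNorm (A + B) := by
    have e : W * (A + B) = cdiag hAB (fun i => s i * hAB.eigenvalues i) := by
      calc W * (A + B) = W * cdiag hAB hAB.eigenvalues := by rw [← spectral hAB]
        _ = cdiag hAB (fun i => s i * hAB.eigenvalues i) := by rw [hWdef, cdiag_mul]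
    rw [e, cdiag_trace, Complex.re_sum, traceNorm_herm hAB]
    refine Finset.sum_congr rfl fun i _ => ?_
    rw [Complex.ofReal_re, hs]
    dsimp only
    split
    · rename_i h; rw [_root_.abs_of_neg h]; ring
    · rename_i h; rw [_root_.abs_of_nonneg (not_lt.mp h)]; ring
  have h2 := abs_re_trace_mul_le hA (hAB.eigenvectorUnitary).2 hsb hWform
  have h3 := abs_re_trace_mul_le hB (hAB.eigenvectorUnitary).2 hsb hWform
  calc traceNorm (A + B) = ((W * (A + B)).trace).re := h1.symm
    _ = ((W * A).trace).re + ((W * B).trace).re := by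
        rw [mul_add, Matrix.trace_add, Complex.add_re]
    _ ≤ traceNorm A + traceNorm B :=
        add_le_add ((le_abs_self _).trans h2) ((le_abs_self _).trans h3)

lemma cdiag_sub {M : Matrix ι ι ℂ} (hM : M.IsHermitian) (g h : ι → ℝ) :
    cdiag hM g - cdiag hM h = cdiag hM (fun i => g i - h i) := by
  rw [cdiag, cdiag, cdiag, ← Matrix.sub_mul, ← Matrix.mul_sub, Matrix.diagonal_sub]
  congr 2
  funext i
  push_cast
  rfl

/-- Jordan decomposition of a Hermitian matrix. -/
lemma jordan {M : Matrix ι ι ℂ} (hM : M.IsHermitian) :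
    ∃ P N : Matrix ι ι ℂ, P.PosSemidef ∧ N.PosSemidef ∧ M = P - N ∧
      P.trace.re + N.trace.re = traceNorm M := by
  refine ⟨cdiag hM (fun i => max (hM.eigenvalues i) 0),
    cdiag hM (fun i => max (-hM.eigenvalues i) 0),
    cdiag_psd hM (fun i => le_max_right _ _), cdiag_psd hM (fun i => le_max_right _ _), ?_, ?_⟩
  · rw [cdiag_sub]
    have : (fun i => max (hM.eigenvalues i) 0 - max (-hM.eigenvalues i) 0) = hM.eigenvalues := by
      funext i
      rcases le_total (hM.eigenvalues i) 0 with h | h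
      · rw [max_eq_right h, max_eq_left (by linarith)]; ring
      · rw [max_eq_left h, max_eq_right (by linarith)]; ring
    rw [this, ← spectral hM]
  · rw [cdiag_trace, cdiag_trace, Complex.re_sum, Complex.re_sum, traceNorm_herm hM]
    rw [← Finset.sum_add_distrib]
    refine Finset.sum_congr rfl fun i _ => ?_
    rw [Complex.ofReal_re, Complex.ofReal_re]
    rcases le_total (hM.eigenvalues i) 0 with h | h
    · rw [max_eq_right h, max_eq_left (by linarith), _root_.abs_of_nonpos h]; ring
    · rw [max_eq_left h, max_eq_right (by linarith), _root_.abs_of_nonneg h]; ring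

lemma psd_smul {c : ℝ} (hc : 0 ≤ c) {M : Matrix ι ι ℂ} (hM : M.PosSemidef) :
    ((c : ℂ) • M).PosSemidef := by
  exact hM.smul (Complex.zero_le_real.mpr hc)

lemma traceNorm_smul (c : ℝ) (hc : 0 ≤ c) (M : Matrix ι ι ℂ) :
    traceNorm ((c : ℂ) • M) = c * traceNorm M := by
  obtain ⟨S0, hS0psd, hS0sq, hS0tr⟩ := traceNorm_spec M
  have hsq : ((c : ℂ) • S0) ^ 2 = ((c : ℂ) • M)ᴴ * ((c : ℂ) • M) := by
    rw [smul_pow, hS0sq, Matrix.conjTranspose_smul,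
      Matrix.mul_smul, Matrix.smul_mul, smul_smul, Complex.star_def, Complex.conj_ofReal,
      ← Complex.ofReal_mul, ← pow_two, Complex.ofReal_pow]
  rw [traceNorm_eq_of_sq (psd_smul hc hS0psd) hsq,
    Matrix.trace_smul, smul_eq_mul, Complex.re_ofReal_mul, hS0tr]

lemma re_trace_sq_herm {M : Matrix ι ι ℂ} (hM : M.IsHermitian) :
    ((M * M).trace).re = ∑ i, (hM.eigenvalues i) ^ 2 := by
  have hMM : M * M = cdiag hM (fun i => hM.eigenvalues i * hM.eigenvalues i) := by
    conv_lhs => rw [spectral hM]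
    rw [cdiag_mul]
  rw [hMM, cdiag_trace, Complex.re_sum]
  exact Finset.sum_congr rfl fun i _ => by rw [Complex.ofReal_re, pow_two]

lemma traceNorm_le_sqrt_card {M : Matrix ι ι ℂ} (hM : M.IsHermitian) :
    traceNorm M ≤ Real.sqrt ((Fintype.card ι) * ((M * M).trace).re) := by
  rw [traceNorm_herm hM, re_trace_sq_herm hM]
  have h1 : (∑ i, |hM.eigenvalues i|) ^ 2 ≤
      (Fintype.card ι) * ∑ i, (hM.eigenvalues i) ^ 2 := by
    have := sq_sum_le_card_mul_sum_sq (s := (Finset.univ : Finset ι))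
      (f := fun i => |hM.eigenvalues i|)
    simpa [sq_abs] using this
  have h2 : 0 ≤ ∑ i, |hM.eigenvalues i| := Finset.sum_nonneg fun i _ => abs_nonneg _
  calc ∑ i, |hM.eigenvalues i| = Real.sqrt ((∑ i, |hM.eigenvalues i|) ^ 2) :=
        (Real.sqrt_sq h2).symm
    _ ≤ Real.sqrt ((Fintype.card ι) * ∑ i, (hM.eigenvalues i) ^ 2) :=
        Real.sqrt_le_sqrt h1

lemma re_trace_mul_self_eq {M : Matrix ι ι ℂ} (hM : M.IsHermitian) :
    ((M * M).trace).re = ∑ i, ∑ j, Complex.normSq (M i j) := by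
  rw [Matrix.trace, Complex.re_sum]
  refine Finset.sum_congr rfl fun i _ => ?_
  rw [Matrix.diag_apply, Matrix.mul_apply, Complex.re_sum]
  refine Finset.sum_congr rfl fun j _ => ?_
  have h0 : star (M j i) = M i j := by
    have := congrFun (congrFun hM.eq i) j
    rwa [Matrix.conjTranspose_apply] at this
  have hji : M j i = star (M i j) := by rw [← h0, star_star]
  rw [hji, Complex.star_def, Complex.mul_conj, Complex.ofReal_re]

end PureConvAux

namespace PureConvAux
open Matrix Complex
variable {ι : Type*} [Fintype ι] [DecidableEq ι]

lemma pure_herm (a : ι → ℂ) : (pureState a).IsHermitian := by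
  ext i j
  rw [Matrix.conjTranspose_apply, pureState, Matrix.vecMulVec_apply, Matrix.vecMulVec_apply,
    Pi.star_apply, Pi.star_apply, star_mul', star_star]
  exact mul_comm _ _

lemma pureState_mulVec (a x : ι → ℂ) :
    pureState a *ᵥ x = ((star a) ⬝ᵥ x) • a := by
  funext i
  simp only [Matrix.mulVec, dotProduct, pureState, Matrix.vecMulVec_apply,
    Pi.smul_apply, smul_eq_mul, Finset.sum_mul]
  refine Finset.sum_congr rfl fun j _ => ?_
  ring

lemma pure_psd (a : ι → ℂ) : (pureState a).PosSemidef := by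
  exact Matrix.posSemidef_vecMulVec_self_star a

lemma pure_trace {a : ι → ℂ} (ha : IsUnitVec a) : (pureState a).trace = 1 := by
  rw [Matrix.trace]
  have : ∀ i, (pureState a).diag i = (Complex.normSq (a i) : ℂ) := by
    intro i
    rw [Matrix.diag_apply, pureState, Matrix.vecMulVec_apply, Pi.star_apply,
      Complex.star_def, Complex.mul_conj]
  rw [Finset.sum_congr rfl fun i _ => this i, ← Complex.ofReal_sum, ha, Complex.ofReal_one]

lemma pure_density {a : ι → ℂ} (ha : IsUnitVec a) : IsDensityMatrix (pureState a) :=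
  ⟨pure_psd a, pure_trace ha⟩

lemma pure_mul_self {a : ι → ℂ} (ha : IsUnitVec a) :
    pureState a * pureState a = pureState a := by
  ext i j
  rw [Matrix.mul_apply]
  have : ∀ k, pureState a i k * pureState a k j
      = (Complex.normSq (a k) : ℂ) * pureState a i j := by
    intro k
    rw [pureState, Matrix.vecMulVec_apply, Matrix.vecMulVec_apply, Matrix.vecMulVec_apply]
    have hk : a k * star a k = (Complex.normSq (a k) : ℂ) := by
      rw [Pi.star_apply, Complex.star_def, Complex.mul_conj]
    calc a i * star a k * (a k * star a j)
        = (a k * star a k) * (a i * star a j) := by ring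
      _ = (Complex.normSq (a k) : ℂ) * (a i * star a j) := by rw [hk]
  rw [Finset.sum_congr rfl fun k _ => this k, ← Finset.sum_mul, ← Complex.ofReal_sum, ha,
    Complex.ofReal_one, one_mul]

lemma cptp_psd {Λ : Matrix ι ι ℂ →ₗ[ℂ] Matrix ι ι ℂ} (hΛ : IsCPTP Λ)
    {N : Matrix ι ι ℂ} (hN : N.PosSemidef) : (Λ N).PosSemidef := by
  have hMpsd : ((N.submatrix Prod.fst Prod.fst) :
      Matrix (ι × Fin 1) (ι × Fin 1) ℂ).PosSemidef := hN.submatrix _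
  have hamp := hΛ.1 1 _ hMpsd
  have heq : Λ N = (amplify Λ 1 (N.submatrix Prod.fst Prod.fst)).submatrix
      (fun i : ι => (i, (0 : Fin 1))) (fun j : ι => (j, (0 : Fin 1))) := by
    ext i j
    rfl
  rw [heq]
  exact hamp.submatrix _

lemma cptp_herm {Λ : Matrix ι ι ℂ →ₗ[ℂ] Matrix ι ι ℂ} (hΛ : IsCPTP Λ)
    {M : Matrix ι ι ℂ} (hM : M.IsHermitian) : (Λ M).IsHermitian := by
  obtain ⟨P, Nm, hP, hNm, hMeq, -⟩ := jordan hM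
  rw [hMeq, map_sub]
  exact ((cptp_psd hΛ hP).1).sub ((cptp_psd hΛ hNm).1)

/-- A dual witness for the trace norm of a Hermitian matrix. -/
lemma exists_dual_witness {M : Matrix ι ι ℂ} (hM : M.IsHermitian) :
    ∃ W : Matrix ι ι ℂ,
      (∀ {A : Matrix ι ι ℂ}, A.IsHermitian → |((W * A).trace).re| ≤ traceNorm A) ∧
      ((W * M).trace).re = traceNorm M := by
  set s : ι → ℝ := fun i => if hM.eigenvalues i < 0 then -1 else 1 with hs
  have hsb : ∀ i, |s i| ≤ 1 := by
    intro i; rw [hs]; dsimp only; split <;> simp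
  refine ⟨cdiag hM s, fun {A} hA => abs_re_trace_mul_le hA (hM.eigenvectorUnitary).2 hsb rfl, ?_⟩
  have e : cdiag hM s * M = cdiag hM (fun i => s i * hM.eigenvalues i) := by
    calc cdiag hM s * M = cdiag hM s * cdiag hM hM.eigenvalues := by rw [← spectral hM]
      _ = cdiag hM (fun i => s i * hM.eigenvalues i) := by rw [cdiag_mul]
  rw [e, cdiag_trace, Complex.re_sum, traceNorm_herm hM]
  refine Finset.sum_congr rfl fun i _ => ?_
  rw [Complex.ofReal_re, hs]
  dsimp only
  split
  · rename_i h; rw [_root_.abs_of_neg h]; ring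
  · rename_i h; rw [_root_.abs_of_nonneg (not_lt.mp h)]; ring

/-- Trace-norm contractivity of CPTP maps on Hermitian matrices. -/
lemma cptp_contract {Λ : Matrix ι ι ℂ →ₗ[ℂ] Matrix ι ι ℂ} (hΛ : IsCPTP Λ)
    {M : Matrix ι ι ℂ} (hM : M.IsHermitian) : traceNorm (Λ M) ≤ traceNorm M := by
  obtain ⟨P, Nm, hP, hNm, hMeq, htr⟩ := jordan hM
  obtain ⟨W, hWb, hWeq⟩ := exists_dual_witness (cptp_herm hΛ hM)
  have hsplit : Λ M = Λ P - Λ Nm := by rw [hMeq, map_sub]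
  calc traceNorm (Λ M) = ((W * Λ M).trace).re := hWeq.symm
    _ = ((W * Λ P).trace).re - ((W * Λ Nm).trace).re := by
        rw [hsplit, mul_sub, Matrix.trace_sub, Complex.sub_re]
    _ ≤ |((W * Λ P).trace).re| + |((W * Λ Nm).trace).re| := by
        have := abs_add_le (((W * Λ P).trace).re) (-((W * Λ Nm).trace).re)
        calc ((W * Λ P).trace).re - ((W * Λ Nm).trace).re
            ≤ |((W * Λ P).trace).re + -((W * Λ Nm).trace).re| := by
              rw [← sub_eq_add_neg]; exact le_abs_self _
          _ ≤ |((W * Λ P).trace).re| + |(-((W * Λ Nm).trace).re)| := abs_add_le _ _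
          _ = |((W * Λ P).trace).re| + |((W * Λ Nm).trace).re| := by rw [abs_neg]
    _ ≤ traceNorm (Λ P) + traceNorm (Λ Nm) :=
        add_le_add (hWb (cptp_psd hΛ hP).1) (hWb (cptp_psd hΛ hNm).1)
    _ = ((Λ P).trace).re + ((Λ Nm).trace).re := by
        rw [traceNorm_psd (cptp_psd hΛ hP), traceNorm_psd (cptp_psd hΛ hNm)]
    _ = P.trace.re + Nm.trace.re := by rw [hΛ.2, hΛ.2]
    _ = traceNorm M := htr

lemma herm_trace_re {M : Matrix ι ι ℂ} (hM : M.IsHermitian) :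
    M.trace.re = ∑ i, hM.eigenvalues i := by
  conv_lhs => rw [spectral hM]
  rw [cdiag_trace, Complex.re_sum]
  exact Finset.sum_congr rfl fun i _ => Complex.ofReal_re _

lemma eig_le_one {Y : Matrix ι ι ℂ} (hY : IsDensityMatrix Y) :
    ∀ i, |hY.1.1.eigenvalues i| ≤ 1 := by
  intro i
  have hnn : ∀ j, 0 ≤ hY.1.1.eigenvalues j := fun j => hY.1.eigenvalues_nonneg j
  have hsum : ∑ j, hY.1.1.eigenvalues j = 1 := by
    rw [← herm_trace_re hY.1.1, hY.2, Complex.one_re]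
  rw [_root_.abs_of_nonneg (hnn i)]
  calc hY.1.1.eigenvalues i ≤ ∑ j, hY.1.1.eigenvalues j :=
        Finset.single_le_sum (fun j _ => hnn j) (Finset.mem_univ i)
    _ = 1 := hsum

/-- Hölder for a state against a Hermitian matrix. -/
lemma state_holder {Y τ : Matrix ι ι ℂ} (hY : IsDensityMatrix Y) (hτ : τ.IsHermitian) :
    |((Y * τ).trace).re| ≤ traceNorm τ :=
  abs_re_trace_mul_le hτ (hY.1.1.eigenvectorUnitary).2 (eig_le_one hY) (spectral hY.1.1)

lemma traceNorm_state {τ : Matrix ι ι ℂ} (hτ : IsDensityMatrix τ) : traceNorm τ = 1 := by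
  rw [traceNorm_psd hτ.1, hτ.2, Complex.one_re]

lemma traceNorm_neg (M : Matrix ι ι ℂ) : traceNorm (-M) = traceNorm M := by
  obtain ⟨S0, hS0psd, hS0sq, hS0tr⟩ := traceNorm_spec M
  rw [traceNorm_eq_of_sq hS0psd
    (by rw [hS0sq, Matrix.conjTranspose_neg, neg_mul_neg]), hS0tr]

lemma traceNorm_sub_states_le_two {σ τ : Matrix ι ι ℂ} (hσ : IsDensityMatrix σ)
    (hτ : IsDensityMatrix τ) : traceNorm (σ - τ) ≤ 2 := by
  have h := traceNorm_add_le hσ.1.1 hτ.1.1.neg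
  rw [← sub_eq_add_neg, traceNorm_neg, traceNorm_state hσ, traceNorm_state hτ] at h
  linarith

lemma ov_upper {Y τ : Matrix ι ι ℂ} (hY : IsDensityMatrix Y) (hτ : IsDensityMatrix τ) :
    ((Y * τ).trace).re ≤ 1 := by
  have := (le_abs_self _).trans (state_holder hY hτ.1.1)
  rwa [traceNorm_state hτ] at this

lemma ov_lower {a : ι → ℂ} (ha : IsUnitVec a) {τ : Matrix ι ι ℂ} (hτ : τ.IsHermitian) :
    1 - traceNorm (τ - pureState a) ≤ ((pureState a * τ).trace).re := by
  set Y := pureState a with hYdef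
  have hsplit : (Y * τ).trace = (Y * (τ - Y)).trace + (Y * Y).trace := by
    rw [← Matrix.trace_add, ← mul_add]
    congr 1
    rw [sub_add_cancel]
  have hYY : ((Y * Y).trace).re = 1 := by
    rw [hYdef, pure_mul_self ha, pure_trace ha, Complex.one_re]
  have hherm : (τ - Y).IsHermitian := hτ.sub (pure_herm a)
  have hre : ((Y * τ).trace).re = ((Y * (τ - Y)).trace).re + 1 := by
    rw [hsplit, Complex.add_re, hYY]
  rw [hre]
  have hb := neg_le_of_abs_le (state_holder (pure_density ha) hherm)
  linarith

lemma psd_trace_sq_le {τ : Matrix ι ι ℂ} (hτ : IsDensityMatrix τ) :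
    ((τ * τ).trace).re ≤ 1 := by
  rw [re_trace_sq_herm hτ.1.1]
  have hsum : ∑ j, hτ.1.1.eigenvalues j = 1 := by
    rw [← herm_trace_re hτ.1.1, hτ.2, Complex.one_re]
  calc ∑ i, (hτ.1.1.eigenvalues i) ^ 2 ≤ (∑ i, hτ.1.1.eigenvalues i) ^ 2 :=
        Finset.sum_sq_le_sq_sum_of_nonneg (fun i _ => hτ.1.eigenvalues_nonneg i)
    _ = 1 := by rw [hsum]; ring

/-- Bound on the trace norm distance to a pure state in terms of the overlap. -/
lemma tn_le_of_overlap {a : ι → ℂ} (ha : IsUnitVec a) {τ : Matrix ι ι ℂ}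
    (hτ : IsDensityMatrix τ) :
    traceNorm (τ - pureState a) ≤
      Real.sqrt ((2 * Fintype.card ι) * (1 - ((pureState a * τ).trace).re)) := by
  set Y := pureState a with hYdef
  have hherm : (τ - Y).IsHermitian := hτ.1.1.sub (pure_herm a)
  refine (traceNorm_le_sqrt_card hherm).trans ?_
  apply Real.sqrt_le_sqrt
  have hexp : (τ - Y) * (τ - Y) = τ * τ - τ * Y - Y * τ + Y * Y := by
    rw [sub_mul, mul_sub, mul_sub]
    abel
  have hcomm : (τ * Y).trace = (Y * τ).trace := Matrix.trace_mul_comm τ Y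
  have hYY : ((Y * Y).trace).re = 1 := by
    rw [hYdef, pure_mul_self ha, pure_trace ha, Complex.one_re]
  have h2 : (((τ - Y) * (τ - Y)).trace).re
      = ((τ * τ).trace).re - 2 * ((Y * τ).trace).re + 1 := by
    rw [hexp, Matrix.trace_add, Matrix.trace_sub, Matrix.trace_sub, hcomm]
    rw [Complex.add_re, Complex.sub_re, Complex.sub_re, hYY]
    ring
  have h3 := psd_trace_sq_le hτ
  have hcard : (0 : ℝ) ≤ (Fintype.card ι : ℝ) := Nat.cast_nonneg _
  rw [h2]
  nlinarith [h3]

end PureConvAux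

namespace PureConvAux
open Matrix Complex

variable {d : ℕ}

lemma state_channel (Λ : QChannel d) {τ : Matrix (Fin d) (Fin d) ℂ}
    (hτ : IsDensityMatrix τ) : IsDensityMatrix (Λ.toFun τ) :=
  ⟨cptp_psd Λ.cptp hτ.1, by rw [Λ.cptp.2, hτ.2]⟩

lemma converts_trans (RT : ResourceTheory d) {ρ σ τ : Matrix (Fin d) (Fin d) ℂ}
    (hρ : IsDensityMatrix ρ) (hσ : IsDensityMatrix σ) (hτ : IsDensityMatrix τ)
    (h1 : Converts RT ρ σ) (h2 : Converts RT σ τ) : Converts RT ρ τ := by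
  intro ε hε
  obtain ⟨Λ₂, hΛ₂O, hΛ₂⟩ := h2 (ε / 2) (by positivity)
  obtain ⟨Λ₁, hΛ₁O, hΛ₁⟩ := h1 (ε / 2) (by positivity)
  obtain ⟨Λ, hΛO, hΛ⟩ := RT.comp_mem Λ₁ hΛ₁O Λ₂ hΛ₂O
  refine ⟨Λ, hΛO, ?_⟩
  rw [hΛ]
  have key : Λ₂.toFun (Λ₁.toFun ρ) - τ
      = Λ₂.toFun (Λ₁.toFun ρ - σ) + (Λ₂.toFun σ - τ) := by
    rw [map_sub]; abel
  rw [key]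
  have hherm1 : (Λ₁.toFun ρ - σ).IsHermitian :=
    (cptp_psd Λ₁.cptp hρ.1).1.sub hσ.1.1
  calc traceNorm (Λ₂.toFun (Λ₁.toFun ρ - σ) + (Λ₂.toFun σ - τ))
      ≤ traceNorm (Λ₂.toFun (Λ₁.toFun ρ - σ)) + traceNorm (Λ₂.toFun σ - τ) :=
        traceNorm_add_le (cptp_herm Λ₂.cptp hherm1)
          ((cptp_psd Λ₂.cptp hσ.1).1.sub hτ.1.1)
    _ ≤ traceNorm (Λ₁.toFun ρ - σ) + traceNorm (Λ₂.toFun σ - τ) :=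
        add_le_add_left (cptp_contract Λ₂.cptp hherm1) _
    _ < ε / 2 + ε / 2 := add_lt_add hΛ₁ hΛ₂
    _ = ε := by ring

lemma mix_density {σ τ : Matrix (Fin d) (Fin d) ℂ} (hσ : IsDensityMatrix σ)
    (hτ : IsDensityMatrix τ) {t : ℝ} (h0 : 0 ≤ t) (h1 : t ≤ 1) :
    IsDensityMatrix (((1 - t : ℝ) : ℂ) • σ + ((t : ℝ) : ℂ) • τ) := by
  refine ⟨Matrix.PosSemidef.add (psd_smul (by linarith) hσ.1) (psd_smul h0 hτ.1), ?_⟩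
  rw [Matrix.trace_add, Matrix.trace_smul, Matrix.trace_smul, hσ.2, hτ.2]
  simp only [smul_eq_mul]
  push_cast
  ring

/-- Every pure state is either "top" (converts to every state) or
"absorbing" (every state converts to it). -/
lemma top_or_abs (RT : ResourceTheory d)
    (htot : ∀ ρ σ : Matrix (Fin d) (Fin d) ℂ, IsDensityMatrix ρ → IsDensityMatrix σ →
      Converts RT ρ σ ∨ Converts RT σ ρ)
    {χ : Fin d → ℂ} (hχ : IsUnitVec χ) :
    (∀ μ, IsDensityMatrix μ → Converts RT (pureState χ) μ) ∨
    (∀ X, IsDensityMatrix X → Converts RT X (pureState χ)) := by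
  by_cases habs : ∀ X, IsDensityMatrix X → Converts RT X (pureState χ)
  · exact Or.inr habs
  push_neg at habs
  obtain ⟨X, hXdens, hXnc⟩ := habs
  left
  intro μ hμ ε hε
  set Y := pureState χ with hYdef
  have hYdens : IsDensityMatrix Y := pure_density hχ
  set δ : ℝ := min (1/2) (ε/8) with hδdef
  have hδpos : 0 < δ := by
    rw [hδdef]; positivity
  have hδle : δ ≤ ε / 8 := min_le_right _ _
  have hδle2 : δ ≤ 1/2 := min_le_left _ _
  set s : ℝ := 1 - δ with hsdef
  have hs0 : 0 ≤ s := by rw [hsdef]; linarith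
  have hs1 : s ≤ 1 := by rw [hsdef]; linarith
  set ν : Matrix (Fin d) (Fin d) ℂ := ((1 - s : ℝ) : ℂ) • X + ((s : ℝ) : ℂ) • μ with hνdef
  have hνdens : IsDensityMatrix ν := mix_density hXdens hμ hs0 hs1
  -- if ν could be converted to Y, then so could its component X
  have hnc : ¬ Converts RT ν Y := by
    intro hc
    apply hXnc
    intro ε' hε'
    set η : ℝ := δ * (ε' ^ 2 / (2 * d + 1)) with hηdef
    have hηpos : 0 < η := by rw [hηdef]; positivity
    obtain ⟨Λ, hΛO, hΛ⟩ := hc η hηpos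
    refine ⟨Λ, hΛO, ?_⟩
    have hΛν : IsDensityMatrix (Λ.toFun ν) := state_channel Λ hνdens
    have hΛX : IsDensityMatrix (Λ.toFun X) := state_channel Λ hXdens
    have hΛμ : IsDensityMatrix (Λ.toFun μ) := state_channel Λ hμ
    have h1 : 1 - η ≤ ((Y * Λ.toFun ν).trace).re := by
      have := ov_lower hχ hΛν.1.1
      rw [← hYdef] at this
      linarith
    have hdecomp : Λ.toFun ν = ((1 - s : ℝ) : ℂ) • Λ.toFun X + ((s : ℝ) : ℂ) • Λ.toFun μ := by
      simp only [hνdef, map_add, LinearMap.map_smul]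
    have h2 : ((Y * Λ.toFun ν).trace).re
        = (1 - s) * ((Y * Λ.toFun X).trace).re + s * ((Y * Λ.toFun μ).trace).re := by
      rw [hdecomp, mul_add, Matrix.trace_add, Complex.add_re, mul_smul_comm, mul_smul_comm,
        Matrix.trace_smul, Matrix.trace_smul, smul_eq_mul, smul_eq_mul,
        Complex.re_ofReal_mul, Complex.re_ofReal_mul]
    have h3 : ((Y * Λ.toFun μ).trace).re ≤ 1 := ov_upper hYdens hΛμ
    have h4 : 1 - ((Y * Λ.toFun X).trace).re ≤ η / δ := by
      rw [le_div_iff₀ hδpos]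
      have hδs : (1 - s) = δ := by rw [hsdef]; ring
      rw [hδs] at h2
      have h3' : s * ((Y * Λ.toFun μ).trace).re ≤ s := by
        calc s * ((Y * Λ.toFun μ).trace).re ≤ s * 1 := mul_le_mul_of_nonneg_left h3 hs0
          _ = s := mul_one s
      have hsum := h1.trans (le_of_eq h2)
      nlinarith [hsum, h3']
    have h5 := tn_le_of_overlap hχ hΛX
    rw [← hYdef] at h5
    have h6 : (2 * (Fintype.card (Fin d)) : ℝ) * (1 - ((Y * Λ.toFun X).trace).re)
        ≤ (2 * d) * (η / δ) := by
      rw [Fintype.card_fin]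
      have hov1 : ((Y * Λ.toFun X).trace).re ≤ 1 := ov_upper hYdens hΛX
      have : (0:ℝ) ≤ 2 * d := by positivity
      exact mul_le_mul_of_nonneg_left h4 this
    have hηδ : η / δ = ε' ^ 2 / (2 * d + 1) := by
      rw [hηdef, mul_div_cancel_left₀ _ (ne_of_gt hδpos)]
    have h7 : (2 * (d:ℝ)) * (η / δ) < ε' ^ 2 := by
      rw [hηδ]
      calc 2 * (d:ℝ) * (ε' ^ 2 / (2 * d + 1)) = ε' ^ 2 * (2 * d / (2 * d + 1)) := by ring
        _ < ε' ^ 2 * 1 := by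
            apply mul_lt_mul_of_pos_left _ (by positivity)
            rw [div_lt_one (by positivity)]
            linarith
        _ = ε' ^ 2 := by ring
    calc traceNorm (Λ.toFun X - Y)
        ≤ Real.sqrt ((2 * (Fintype.card (Fin d)) : ℝ) * (1 - ((Y * Λ.toFun X).trace).re)) := h5
      _ ≤ Real.sqrt ((2 * d) * (η / δ)) := Real.sqrt_le_sqrt h6
      _ < ε' := by
          rw [show ((2:ℝ) * d) * (η / δ) = 2 * (d:ℝ) * (η / δ) by ring]
          exact (Real.sqrt_lt' hε').mpr h7
  -- total order forces Y → ν
  have hcv : Converts RT Y ν := (htot ν Y hνdens hYdens).resolve_left hnc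
  obtain ⟨Λ, hΛO, hΛ⟩ := hcv (ε / 2) (by positivity)
  refine ⟨Λ, hΛO, ?_⟩
  have key : Λ.toFun Y - μ = (Λ.toFun Y - ν) + (ν - μ) := by abel
  rw [key]
  have hνμ : ν - μ = ((δ : ℝ) : ℂ) • (X - μ) := by
    rw [hνdef, hsdef, smul_sub]
    push_cast
    module
  have hbound2 : traceNorm (ν - μ) ≤ δ * 2 := by
    rw [hνμ, traceNorm_smul δ (le_of_lt hδpos)]
    exact mul_le_mul_of_nonneg_left (traceNorm_sub_states_le_two hXdens hμ) (le_of_lt hδpos)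
  calc traceNorm ((Λ.toFun Y - ν) + (ν - μ))
      ≤ traceNorm (Λ.toFun Y - ν) + traceNorm (ν - μ) :=
        traceNorm_add_le ((state_channel Λ hYdens).1.1.sub hνdens.1.1)
          (hνdens.1.1.sub hμ.1.1)
    _ < ε / 2 + ε / 2 := by
        apply add_lt_add_of_lt_of_le hΛ
        calc traceNorm (ν - μ) ≤ δ * 2 := hbound2
          _ ≤ (ε / 8) * 2 := by linarith
          _ ≤ ε / 2 := by linarith
    _ = ε := by ring

end PureConvAux

namespace PureConvAux
open Matrix Complex
variable {ι : Type*} [Fintype ι] [DecidableEq ι]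

lemma normSq_add_le (z w : ℂ) : normSq (z + w) ≤ 2 * normSq z + 2 * normSq w := by
  have h1 : ‖z + w‖ ≤ ‖z‖ + ‖w‖ := norm_add_le z w
  have h2 : normSq (z + w) = ‖z + w‖ ^ 2 := (Complex.sq_norm _).symm
  have h3 : normSq z = ‖z‖ ^ 2 := (Complex.sq_norm _).symm
  have h4 : normSq w = ‖w‖ ^ 2 := (Complex.sq_norm _).symm
  rw [h2, h3, h4]
  have h5 : ‖z + w‖ ^ 2 ≤ (‖z‖ + ‖w‖) ^ 2 :=
    pow_le_pow_left₀ (norm_nonneg _) h1 2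
  nlinarith [h5, sq_nonneg (‖z‖ - ‖w‖)]

lemma normSq_mul_star (x y : ℂ) : normSq (x * star y) = normSq x * normSq y := by
  rw [Complex.star_def, Complex.normSq_mul, Complex.normSq_conj]

/-- Quantitative continuity of `pureState` in the trace norm. -/
lemma tn_pure_sub (a b : ι → ℂ) :
    traceNorm (pureState a - pureState b) ≤
      Real.sqrt ((Fintype.card ι) * ((∑ i, normSq (a i - b i)) *
        (2 * (∑ i, normSq (a i)) + 2 * (∑ i, normSq (b i))))) := by
  set u : ι → ℂ := fun i => a i - b i with hu
  set v : ι → ℂ := fun i => a i + b i with hv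
  set S : Matrix ι ι ℂ := Matrix.of (fun i j => u i * star (v j) + v i * star (u j)) with hSdef
  have hSapp : ∀ i j, S i j = u i * star (v j) + v i * star (u j) := fun i j => rfl
  have hsplit : pureState a - pureState b = ((1/2 : ℝ) : ℂ) • S := by
    ext i j
    rw [Matrix.sub_apply, Matrix.smul_apply, hSapp, pureState, pureState,
      Matrix.vecMulVec_apply, Matrix.vecMulVec_apply, Pi.star_apply, Pi.star_apply, hu, hv]
    dsimp only
    rw [star_add (a j) (b j), star_sub (a j) (b j), smul_eq_mul]
    push_cast
    ring
  have hSherm : S.IsHermitian := by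
    ext i j
    rw [Matrix.conjTranspose_apply, hSapp, hSapp, star_add, star_mul', star_mul',
      star_star, star_star]
    ring
  have hF : ((S * S).trace).re ≤ 4 * ((∑ i, normSq (u i)) * (∑ i, normSq (v i))) := by
    rw [re_trace_mul_self_eq hSherm]
    have hij : ∀ i j, normSq (S i j) ≤
        2 * (normSq (u i) * normSq (v j)) + 2 * (normSq (v i) * normSq (u j)) := by
      intro i j
      rw [hSapp]
      calc normSq (u i * star (v j) + v i * star (u j))
          ≤ 2 * normSq (u i * star (v j)) + 2 * normSq (v i * star (u j)) :=
            normSq_add_le _ _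
        _ = 2 * (normSq (u i) * normSq (v j)) + 2 * (normSq (v i) * normSq (u j)) := by
            rw [normSq_mul_star, normSq_mul_star]
    calc ∑ i, ∑ j, normSq (S i j)
        ≤ ∑ i, ∑ j, (2 * (normSq (u i) * normSq (v j)) + 2 * (normSq (v i) * normSq (u j))) :=
          Finset.sum_le_sum fun i _ => Finset.sum_le_sum fun j _ => hij i j
      _ = 2 * ((∑ i, normSq (u i)) * (∑ j, normSq (v j)))
          + 2 * ((∑ i, normSq (v i)) * (∑ j, normSq (u j))) := by
          rw [Finset.sum_mul_sum, Finset.sum_mul_sum]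
          rw [Finset.mul_sum, Finset.mul_sum, ← Finset.sum_add_distrib]
          refine Finset.sum_congr rfl fun i _ => ?_
          rw [Finset.mul_sum, Finset.mul_sum, ← Finset.sum_add_distrib]
      _ = 4 * ((∑ i, normSq (u i)) * (∑ i, normSq (v i))) := by ring
  have hSv : (∑ i, normSq (v i)) ≤ 2 * (∑ i, normSq (a i)) + 2 * (∑ i, normSq (b i)) := by
    rw [Finset.mul_sum, Finset.mul_sum, ← Finset.sum_add_distrib]
    exact Finset.sum_le_sum fun i _ => normSq_add_le (a i) (b i)
  have hSu0 : (0:ℝ) ≤ ∑ i, normSq (u i) := Finset.sum_nonneg fun i _ => normSq_nonneg _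
  have hcard : (0:ℝ) ≤ (Fintype.card ι : ℝ) := Nat.cast_nonneg _
  have h2 : traceNorm (pureState a - pureState b) = (1/2) * traceNorm S := by
    rw [hsplit, traceNorm_smul _ (by norm_num)]
  rw [h2]
  have h3 := traceNorm_le_sqrt_card hSherm
  have h4 : (Fintype.card ι : ℝ) * ((S * S).trace).re ≤
      4 * ((Fintype.card ι : ℝ) * ((∑ i, normSq (u i)) *
        (2 * (∑ i, normSq (a i)) + 2 * (∑ i, normSq (b i))))) := by
    have hb1 : ((S * S).trace).re ≤ 4 * ((∑ i, normSq (u i)) *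
        (2 * (∑ i, normSq (a i)) + 2 * (∑ i, normSq (b i)))) := by
      refine hF.trans ?_
      have := mul_le_mul_of_nonneg_left hSv hSu0
      nlinarith [this]
    calc (Fintype.card ι : ℝ) * ((S * S).trace).re
        ≤ (Fintype.card ι : ℝ) * (4 * ((∑ i, normSq (u i)) *
          (2 * (∑ i, normSq (a i)) + 2 * (∑ i, normSq (b i))))) :=
          mul_le_mul_of_nonneg_left hb1 hcard
      _ = 4 * ((Fintype.card ι : ℝ) * ((∑ i, normSq (u i)) *
          (2 * (∑ i, normSq (a i)) + 2 * (∑ i, normSq (b i))))) := by ring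
  have h5 : traceNorm S ≤ Real.sqrt (4 * ((Fintype.card ι : ℝ) * ((∑ i, normSq (u i)) *
      (2 * (∑ i, normSq (a i)) + 2 * (∑ i, normSq (b i)))))) :=
    h3.trans (Real.sqrt_le_sqrt h4)
  have h6 : Real.sqrt (4 * ((Fintype.card ι : ℝ) * ((∑ i, normSq (u i)) *
      (2 * (∑ i, normSq (a i)) + 2 * (∑ i, normSq (b i))))))
      = 2 * Real.sqrt ((Fintype.card ι : ℝ) * ((∑ i, normSq (u i)) *
      (2 * (∑ i, normSq (a i)) + 2 * (∑ i, normSq (b i))))) := by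
    rw [show (4:ℝ) = 2 ^ 2 by norm_num, Real.sqrt_mul (by positivity),
      Real.sqrt_sq (by norm_num : (0:ℝ) ≤ 2)]
  rw [hu] at *
  linarith [h5, h6.le, h6.ge]

end PureConvAux

namespace PureConvAux
open Matrix Complex

variable {d : ℕ}

lemma euclid_normSq (z : EuclideanSpace ℂ (Fin d)) :
    ∑ i, Complex.normSq (z i) = ‖z‖ ^ 2 := by
  rw [EuclideanSpace.norm_eq, Real.sq_sqrt (Finset.sum_nonneg fun i _ => sq_nonneg _)]
  refine Finset.sum_congr rfl fun i _ => ?_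
  rw [← Complex.sq_norm]

lemma unit_of_sphere {x : EuclideanSpace ℂ (Fin d)}
    (hx : x ∈ Metric.sphere (0 : EuclideanSpace ℂ (Fin d)) 1) :
    IsUnitVec (fun i => x i) := by
  have hn : ‖x‖ = 1 := by rwa [mem_sphere_zero_iff_norm] at hx
  have h := euclid_normSq x
  rw [hn] at h
  simpa [IsUnitVec] using h

lemma sphere_of_unit {v : Fin d → ℂ} (hv : IsUnitVec v) :
    ((WithLp.equiv 2 (Fin d → ℂ)).symm v) ∈
      Metric.sphere (0 : EuclideanSpace ℂ (Fin d)) 1 := by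
  rw [mem_sphere_zero_iff_norm]
  have h1 : ∑ i, normSq (((WithLp.equiv 2 (Fin d → ℂ)).symm v) i) = 1 := hv
  have h2 := euclid_normSq ((WithLp.equiv 2 (Fin d → ℂ)).symm v)
  rw [h1] at h2
  have hnn : 0 ≤ ‖(WithLp.equiv 2 (Fin d → ℂ)).symm v‖ := norm_nonneg _
  nlinarith [h2, hnn]

/-- The set of "top" vectors is closed. -/
lemma isClosed_T (RT : ResourceTheory d) :
    IsClosed {x : EuclideanSpace ℂ (Fin d) | ∀ μ, IsDensityMatrix μ →
      Converts RT (pureState (fun i => x i)) μ} := by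
  apply isClosed_of_closure_subset
  intro x hx μ hμ ε hε
  set Sa : ℝ := ∑ i, normSq (x i) with hSa
  have hSa0 : 0 ≤ Sa := Finset.sum_nonneg fun i _ => normSq_nonneg _
  set K : ℝ := 2 * Sa + 2 * (2 * Sa + 2) with hK
  have hKpos : 0 < K := by rw [hK]; nlinarith
  have hdK1 : 0 < (d : ℝ) * K + 1 := by
    have : 0 ≤ (d : ℝ) * K := mul_nonneg (Nat.cast_nonneg _) hKpos.le
    linarith
  have hsq : 0 < Real.sqrt ((d : ℝ) * K + 1) := Real.sqrt_pos.mpr hdK1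
  set δ : ℝ := min 1 (ε / (4 * Real.sqrt ((d : ℝ) * K + 1))) with hδ
  have hδpos : 0 < δ := lt_min one_pos (div_pos hε (by positivity))
  have hδ1 : δ ≤ 1 := min_le_left _ _
  have hδ2 : δ ≤ ε / (4 * Real.sqrt ((d : ℝ) * K + 1)) := min_le_right _ _
  obtain ⟨b, hbT, hdist⟩ := Metric.mem_closure_iff.mp hx δ hδpos
  obtain ⟨Λ, hΛO, hΛ⟩ := hbT μ hμ (ε / 2) (by positivity)
  refine ⟨Λ, hΛO, ?_⟩
  have hdn : ‖x - b‖ < δ := by rwa [← dist_eq_norm]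
  have hSdsum : ∑ i, normSq (x i - b i) = ‖x - b‖ ^ 2 := by
    have h := euclid_normSq (x - b)
    have happ : ∀ i, (x - b) i = x i - b i := fun i => rfl
    rwa [Finset.sum_congr rfl fun i _ => by rw [happ i]] at h
  have hSd1 : ∑ i, normSq (x i - b i) ≤ δ ^ 2 := by
    rw [hSdsum]
    exact pow_le_pow_left₀ (norm_nonneg _) hdn.le 2
  have hSd0 : 0 ≤ ∑ i, normSq (x i - b i) := Finset.sum_nonneg fun i _ => normSq_nonneg _
  have hSb : ∑ i, normSq (b i) ≤ 2 * Sa + 2 := by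
    have hpt : ∀ i, normSq (b i) ≤ 2 * normSq (x i) + 2 * normSq (x i - b i) := by
      intro i
      have := normSq_add_le (x i) (b i - x i)
      have he : x i + (b i - x i) = b i := by ring
      rw [he] at this
      have hneg : normSq (b i - x i) = normSq (x i - b i) := by
        rw [show b i - x i = -(x i - b i) by ring, normSq_neg]
      linarith [this, hneg.le, hneg.ge]
    calc ∑ i, normSq (b i) ≤ ∑ i, (2 * normSq (x i) + 2 * normSq (x i - b i)) :=
          Finset.sum_le_sum fun i _ => hpt i
      _ = 2 * Sa + 2 * ∑ i, normSq (x i - b i) := by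
          rw [Finset.sum_add_distrib, ← Finset.mul_sum, ← Finset.mul_sum, hSa]
      _ ≤ 2 * Sa + 2 := by nlinarith [hSd1, hδ1, hδpos.le]
  -- trace-norm bound on the pure state difference
  have hpure := tn_pure_sub (ι := Fin d) (fun i => x i) (fun i => b i)
  have hcard : (Fintype.card (Fin d) : ℝ) = d := by rw [Fintype.card_fin]
  have hinner : (Fintype.card (Fin d) : ℝ) * ((∑ i, normSq (x i - b i)) *
      (2 * (∑ i, normSq (x i)) + 2 * (∑ i, normSq (b i))))
      ≤ ((d : ℝ) * K) * δ ^ 2 := by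
    rw [hcard]
    have hb1 : 2 * (∑ i, normSq (x i)) + 2 * (∑ i, normSq (b i)) ≤ K := by
      rw [hK, ← hSa]
      nlinarith [hSb]
    have hb0 : 0 ≤ 2 * (∑ i, normSq (x i)) + 2 * (∑ i, normSq (b i)) := by
      have h1 : 0 ≤ ∑ i, normSq (b i) := Finset.sum_nonneg fun i _ => normSq_nonneg _
      rw [← hSa]; linarith
    have := mul_le_mul hSd1 hb1 hb0 (sq_nonneg δ)
    calc (d : ℝ) * ((∑ i, normSq (x i - b i)) *
        (2 * (∑ i, normSq (x i)) + 2 * (∑ i, normSq (b i))))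
        ≤ (d : ℝ) * (δ ^ 2 * K) := by
          apply mul_le_mul_of_nonneg_left _ (Nat.cast_nonneg _)
          exact this
      _ = ((d : ℝ) * K) * δ ^ 2 := by ring
  have hps : traceNorm (pureState (fun i => x i) - pureState (fun i => b i)) ≤ ε / 4 := by
    refine hpure.trans ?_
    calc Real.sqrt ((Fintype.card (Fin d) : ℝ) * ((∑ i, normSq (x i - b i)) *
        (2 * (∑ i, normSq (x i)) + 2 * (∑ i, normSq (b i)))))
        ≤ Real.sqrt (((d : ℝ) * K) * δ ^ 2) := Real.sqrt_le_sqrt hinner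
      _ = Real.sqrt ((d : ℝ) * K) * δ := by
          rw [Real.sqrt_mul (mul_nonneg (Nat.cast_nonneg _) hKpos.le),
            Real.sqrt_sq hδpos.le]
      _ ≤ Real.sqrt ((d : ℝ) * K + 1) * δ := by
          apply mul_le_mul_of_nonneg_right _ hδpos.le
          exact Real.sqrt_le_sqrt (by linarith)
      _ ≤ Real.sqrt ((d : ℝ) * K + 1) * (ε / (4 * Real.sqrt ((d : ℝ) * K + 1))) :=
          mul_le_mul_of_nonneg_left hδ2 hsq.le
      _ = ε / 4 := by
          field_simp [hsq.ne']
  -- assemble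
  have key : Λ.toFun (pureState fun i => x i) - μ =
      Λ.toFun (pureState (fun i => x i) - pureState (fun i => b i)) +
        (Λ.toFun (pureState fun i => b i) - μ) := by
    rw [map_sub]; abel
  rw [key]
  have hhermd : (pureState (fun i => x i) - pureState (fun i => b i)).IsHermitian :=
    (pure_herm _).sub (pure_herm _)
  calc traceNorm (Λ.toFun (pureState (fun i => x i) - pureState (fun i => b i)) +
        (Λ.toFun (pureState fun i => b i) - μ))
      ≤ traceNorm (Λ.toFun (pureState (fun i => x i) - pureState (fun i => b i))) +
        traceNorm (Λ.toFun (pureState fun i => b i) - μ) :=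
        traceNorm_add_le (cptp_herm Λ.cptp hhermd)
          ((cptp_psd Λ.cptp (pure_psd _)).1.sub hμ.1.1)
    _ ≤ traceNorm (pureState (fun i => x i) - pureState (fun i => b i)) +
        traceNorm (Λ.toFun (pureState fun i => b i) - μ) :=
        add_le_add_left (cptp_contract Λ.cptp hhermd) _
    _ < ε / 4 + ε / 2 := by
        apply add_lt_add_of_le_of_lt hps hΛ
    _ < ε := by linarith

/-- The set of "absorbing" vectors is closed. -/
lemma isClosed_A (RT : ResourceTheory d) :
    IsClosed {x : EuclideanSpace ℂ (Fin d) | ∀ X, IsDensityMatrix X →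
      Converts RT X (pureState (fun i => x i))} := by
  apply isClosed_of_closure_subset
  intro x hx X hX ε hε
  -- same δ analysis, but simpler: we only need the pure-state continuity bound
  set Sa : ℝ := ∑ i, normSq (x i) with hSa
  have hSa0 : 0 ≤ Sa := Finset.sum_nonneg fun i _ => normSq_nonneg _
  set K : ℝ := 2 * Sa + 2 * (2 * Sa + 2) with hK
  have hKpos : 0 < K := by rw [hK]; nlinarith
  have hdK1 : 0 < (d : ℝ) * K + 1 := by
    have : 0 ≤ (d : ℝ) * K := mul_nonneg (Nat.cast_nonneg _) hKpos.le
    linarith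
  have hsq : 0 < Real.sqrt ((d : ℝ) * K + 1) := Real.sqrt_pos.mpr hdK1
  set δ : ℝ := min 1 (ε / (4 * Real.sqrt ((d : ℝ) * K + 1))) with hδ
  have hδpos : 0 < δ := lt_min one_pos (div_pos hε (by positivity))
  have hδ1 : δ ≤ 1 := min_le_left _ _
  have hδ2 : δ ≤ ε / (4 * Real.sqrt ((d : ℝ) * K + 1)) := min_le_right _ _
  obtain ⟨b, hbA, hdist⟩ := Metric.mem_closure_iff.mp hx δ hδpos
  obtain ⟨Λ, hΛO, hΛ⟩ := hbA X hX (ε / 2) (by positivity)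
  refine ⟨Λ, hΛO, ?_⟩
  have hdn : ‖x - b‖ < δ := by rwa [← dist_eq_norm]
  have hSdsum : ∑ i, normSq (x i - b i) = ‖x - b‖ ^ 2 := by
    have h := euclid_normSq (x - b)
    have happ : ∀ i, (x - b) i = x i - b i := fun i => rfl
    rwa [Finset.sum_congr rfl fun i _ => by rw [happ i]] at h
  have hSd1 : ∑ i, normSq (x i - b i) ≤ δ ^ 2 := by
    rw [hSdsum]
    exact pow_le_pow_left₀ (norm_nonneg _) hdn.le 2
  have hSb : ∑ i, normSq (b i) ≤ 2 * Sa + 2 := by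
    have hpt : ∀ i, normSq (b i) ≤ 2 * normSq (x i) + 2 * normSq (x i - b i) := by
      intro i
      have := normSq_add_le (x i) (b i - x i)
      have he : x i + (b i - x i) = b i := by ring
      rw [he] at this
      have hneg : normSq (b i - x i) = normSq (x i - b i) := by
        rw [show b i - x i = -(x i - b i) by ring, normSq_neg]
      linarith [this, hneg.le, hneg.ge]
    calc ∑ i, normSq (b i) ≤ ∑ i, (2 * normSq (x i) + 2 * normSq (x i - b i)) :=
          Finset.sum_le_sum fun i _ => hpt i
      _ = 2 * Sa + 2 * ∑ i, normSq (x i - b i) := by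
          rw [Finset.sum_add_distrib, ← Finset.mul_sum, ← Finset.mul_sum, hSa]
      _ ≤ 2 * Sa + 2 := by nlinarith [hSd1, hδ1, hδpos.le]
  have hpure := tn_pure_sub (ι := Fin d) (fun i => x i) (fun i => b i)
  have hcard : (Fintype.card (Fin d) : ℝ) = d := by rw [Fintype.card_fin]
  have hinner : (Fintype.card (Fin d) : ℝ) * ((∑ i, normSq (x i - b i)) *
      (2 * (∑ i, normSq (x i)) + 2 * (∑ i, normSq (b i))))
      ≤ ((d : ℝ) * K) * δ ^ 2 := by
    rw [hcard]
    have hb1 : 2 * (∑ i, normSq (x i)) + 2 * (∑ i, normSq (b i)) ≤ K := by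
      rw [hK, ← hSa]
      nlinarith [hSb]
    have hb0 : 0 ≤ 2 * (∑ i, normSq (x i)) + 2 * (∑ i, normSq (b i)) := by
      have h1 : 0 ≤ ∑ i, normSq (b i) := Finset.sum_nonneg fun i _ => normSq_nonneg _
      rw [← hSa]; linarith
    have hSd0 : 0 ≤ ∑ i, normSq (x i - b i) := Finset.sum_nonneg fun i _ => normSq_nonneg _
    have := mul_le_mul hSd1 hb1 hb0 (sq_nonneg δ)
    calc (d : ℝ) * ((∑ i, normSq (x i - b i)) *
        (2 * (∑ i, normSq (x i)) + 2 * (∑ i, normSq (b i))))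
        ≤ (d : ℝ) * (δ ^ 2 * K) := by
          apply mul_le_mul_of_nonneg_left _ (Nat.cast_nonneg _)
          exact this
      _ = ((d : ℝ) * K) * δ ^ 2 := by ring
  have hps : traceNorm (pureState (fun i => x i) - pureState (fun i => b i)) ≤ ε / 4 := by
    refine hpure.trans ?_
    calc Real.sqrt ((Fintype.card (Fin d) : ℝ) * ((∑ i, normSq (x i - b i)) *
        (2 * (∑ i, normSq (x i)) + 2 * (∑ i, normSq (b i)))))
        ≤ Real.sqrt (((d : ℝ) * K) * δ ^ 2) := Real.sqrt_le_sqrt hinner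
      _ = Real.sqrt ((d : ℝ) * K) * δ := by
          rw [Real.sqrt_mul (mul_nonneg (Nat.cast_nonneg _) hKpos.le),
            Real.sqrt_sq hδpos.le]
      _ ≤ Real.sqrt ((d : ℝ) * K + 1) * δ := by
          apply mul_le_mul_of_nonneg_right _ hδpos.le
          exact Real.sqrt_le_sqrt (by linarith)
      _ ≤ Real.sqrt ((d : ℝ) * K + 1) * (ε / (4 * Real.sqrt ((d : ℝ) * K + 1))) :=
          mul_le_mul_of_nonneg_left hδ2 hsq.le
      _ = ε / 4 := by
          field_simp [hsq.ne']
  have key : Λ.toFun X - pureState (fun i => x i) =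
      (Λ.toFun X - pureState (fun i => b i)) +
        (pureState (fun i => b i) - pureState (fun i => x i)) := by abel
  rw [key]
  calc traceNorm ((Λ.toFun X - pureState (fun i => b i)) +
        (pureState (fun i => b i) - pureState (fun i => x i)))
      ≤ traceNorm (Λ.toFun X - pureState (fun i => b i)) +
        traceNorm (pureState (fun i => b i) - pureState (fun i => x i)) :=
        traceNorm_add_le ((cptp_psd Λ.cptp hX.1).1.sub (pure_herm _))
          ((pure_herm _).sub (pure_herm _))
    _ < ε / 2 + ε / 4 := by
        apply add_lt_add_of_lt_of_le hΛ
        calc traceNorm (pureState (fun i => b i) - pureState (fun i => x i))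
            = traceNorm (-(pureState (fun i => x i) - pureState (fun i => b i))) := by
              rw [neg_sub]
          _ = traceNorm (pureState (fun i => x i) - pureState (fun i => b i)) :=
              traceNorm_neg _
          _ ≤ ε / 4 := hps
    _ < ε := by linarith

end PureConvAux

/-- Any totally ordered resource theory allows for free transformations
between any two pure states. -/
theorem totally_ordered_pure_state_conversion {d : ℕ} (RT : ResourceTheory d)
    (htot : ∀ ρ σ : Matrix (Fin d) (Fin d) ℂ, IsDensityMatrix ρ → IsDensityMatrix σ →
      Converts RT ρ σ ∨ Converts RT σ ρ)
    (ψ φ : Fin d → ℂ) (hψ : IsUnitVec ψ) (hφ : IsUnitVec φ) :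
    Converts RT (pureState ψ) (pureState φ) := by
  classical
  rcases Nat.eq_zero_or_pos d with hd | hd
  · exfalso
    subst hd
    rw [IsUnitVec] at hψ
    simpa using hψ
  rcases PureConvAux.top_or_abs RT htot hψ with hTψ | hAψ
  · exact hTψ _ (PureConvAux.pure_density hφ)
  rcases PureConvAux.top_or_abs RT htot hφ with hTφ | hAφ
  swap
  · exact hAφ _ (PureConvAux.pure_density hψ)
  -- main case: ψ is absorbing, φ is top.  Use connectedness of the unit sphere.
  have hrank : 1 < Module.rank ℝ (EuclideanSpace ℂ (Fin d)) := by
    have hfr : Module.finrank ℝ (EuclideanSpace ℂ (Fin d)) = 2 * d := by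
      rw [← Module.finrank_mul_finrank ℝ ℂ (EuclideanSpace ℂ (Fin d)),
        Complex.finrank_real_complex, finrank_euclideanSpace_fin]
    rw [← Module.finrank_eq_rank, hfr]
    exact_mod_cast (by omega : 1 < 2 * d)
  have hconn : IsPreconnected (Metric.sphere (0 : EuclideanSpace ℂ (Fin d)) 1) :=
    (isConnected_sphere hrank 0 zero_le_one).isPreconnected
  have hcover : Metric.sphere (0 : EuclideanSpace ℂ (Fin d)) 1 ⊆
      {x : EuclideanSpace ℂ (Fin d) | ∀ μ, IsDensityMatrix μ →
        Converts RT (pureState (fun i => x i)) μ} ∪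
      {x : EuclideanSpace ℂ (Fin d) | ∀ X, IsDensityMatrix X →
        Converts RT X (pureState (fun i => x i))} := by
    intro x hxs
    rcases PureConvAux.top_or_abs RT htot (PureConvAux.unit_of_sphere hxs) with h | h
    · exact Or.inl h
    · exact Or.inr h
  have hne1 : (Metric.sphere (0 : EuclideanSpace ℂ (Fin d)) 1 ∩
      {x : EuclideanSpace ℂ (Fin d) | ∀ μ, IsDensityMatrix μ →
        Converts RT (pureState (fun i => x i)) μ}).Nonempty :=
    ⟨(WithLp.equiv 2 (Fin d → ℂ)).symm φ, PureConvAux.sphere_of_unit hφ, hTφ⟩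
  have hne2 : (Metric.sphere (0 : EuclideanSpace ℂ (Fin d)) 1 ∩
      {x : EuclideanSpace ℂ (Fin d) | ∀ X, IsDensityMatrix X →
        Converts RT X (pureState (fun i => x i))}).Nonempty :=
    ⟨(WithLp.equiv 2 (Fin d → ℂ)).symm ψ, PureConvAux.sphere_of_unit hψ, hAψ⟩
  obtain ⟨c, hcs, hcT, hcA⟩ := isPreconnected_closed_iff.mp hconn _ _
    (PureConvAux.isClosed_T RT) (PureConvAux.isClosed_A RT) hcover hne1 hne2
  have hcunit := PureConvAux.unit_of_sphere hcs
  exact PureConvAux.converts_trans RT (PureConvAux.pure_density hψ)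
    (PureConvAux.pure_density hcunit) (PureConvAux.pure_density hφ)
    (hcA (pureState ψ) (PureConvAux.pure_density hψ))
    (hcT (pureState φ) (PureConvAux.pure_density hφ))
end
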